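/- (Gagliardo–Nirenberg inequality on the circle) There is a universal constant C > 0 such that for every continuously differentiable g : 𝕋 → ℝ with ∫₀¹ g(x) dx = 0, sup_{x∈𝕋} |g(x)| ≤ C · (∫₀¹ |g′(x)|² dx)^{1/3} · (∫₀¹ |g(x)| dx)^{1/3}. -/

import Mathlib

open MeasureTheory Filter intervalIntegral

private lemma gn_memaux (f : ℝ → ℝ) (hf : Continuous f) :
    MemLp (fun t => |f t|) (ENNReal.ofReal 2) (volume.restrict (Set.Ioc (0:ℝ) 1)) := by
  obtain ⟨x₀, _, hx₀⟩ := isCompact_Icc.exists_isMaxOn (Set.nonempty_Icc.2 zero_le_one)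
    hf.abs.continuousOn
  refine MemLp.of_bound (μ := volume.restrict (Set.Ioc (0:ℝ) 1))
    hf.abs.aestronglyMeasurable.restrict (|f x₀|) ?_
  rw [ae_restrict_iff' measurableSet_Ioc]
  refine Filter.Eventually.of_forall fun x hx => ?_
  simpa [Real.norm_eq_abs, abs_abs] using hx₀ ⟨hx.1.le, hx.2⟩

private lemma gn_cs (g : ℝ → ℝ) (hg : ContDiff ℝ 1 g) :
    (∫ t in (0:ℝ)..1, |g t| * |deriv g t|) ≤
      (∫ t in (0:ℝ)..1, |g t| ^ 2) ^ ((1:ℝ)/2) *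
        (∫ t in (0:ℝ)..1, |deriv g t| ^ 2) ^ ((1:ℝ)/2) := by
  have hgc := hg.continuous
  have hg'c := hg.continuous_deriv le_rfl
  have key := integral_mul_le_Lp_mul_Lq_of_nonneg (μ := volume.restrict (Set.Ioc (0:ℝ) 1))
    (Real.HolderConjugate.two_two : Real.HolderConjugate 2 2)
    (f := fun t => |g t|) (g := fun t => |deriv g t|)
    (Filter.Eventually.of_forall fun t => abs_nonneg _)
    (Filter.Eventually.of_forall fun t => abs_nonneg _)
    (gn_memaux g hgc) (gn_memaux _ hg'c)
  rw [intervalIntegral.integral_of_le zero_le_one, intervalIntegral.integral_of_le zero_le_one,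
    intervalIntegral.integral_of_le zero_le_one]
  calc ∫ t in Set.Ioc (0:ℝ) 1, |g t| * |deriv g t| ∂volume
      ≤ (∫ t in Set.Ioc (0:ℝ) 1, |g t| ^ (2:ℝ)) ^ ((1:ℝ)/2) *
        (∫ t in Set.Ioc (0:ℝ) 1, |deriv g t| ^ (2:ℝ)) ^ ((1:ℝ)/2) := key
    _ = _ := by
        have h2 : ∀ a : ℝ, a ^ (2:ℝ) = a ^ (2:ℕ) := fun a => by
          rw [← Real.rpow_natCast a 2]; norm_num
        simp_rw [h2]

private lemma gn_zero (g : ℝ → ℝ) (hc : Continuous g) (hint : (∫ t in (0:ℝ)..1, g t) = 0) :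
    ∃ y ∈ Set.Icc (0:ℝ) 1, g y = 0 := by
  by_contra h
  push_neg at h
  have hi : IntervalIntegrable g volume 0 1 := hc.intervalIntegrable _ _
  rcases lt_or_gt_of_ne (h 0 (by norm_num)) with h0 | h0
  · have hneg : ∀ t ∈ Set.Icc (0:ℝ) 1, g t < 0 := by
      intro t ht
      rcases lt_or_gt_of_ne (h t ht) with h1 | h1
      · exact h1
      · exfalso
        have := intermediate_value_Icc ht.1 (hc.continuousOn (s := Set.Icc 0 t))
        obtain ⟨z, hz, hz0⟩ := this (⟨h0.le, h1.le⟩ : (0:ℝ) ∈ Set.Icc (g 0) (g t))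
        exact h z ⟨hz.1, hz.2.trans ht.2⟩ hz0
    have : (0:ℝ) < ∫ t in (0:ℝ)..1, -g t := by
      apply intervalIntegral_pos_of_pos_on (hi.neg) _ one_pos
      intro t ht
      simpa using hneg t ⟨ht.1.le, ht.2.le⟩
    rw [intervalIntegral.integral_neg, hint] at this
    simp at this
  · have hpos : ∀ t ∈ Set.Icc (0:ℝ) 1, 0 < g t := by
      intro t ht
      rcases lt_or_gt_of_ne (h t ht) with h1 | h1
      · exfalso
        have := intermediate_value_Icc' ht.1 (hc.continuousOn (s := Set.Icc 0 t))
        obtain ⟨z, hz, hz0⟩ := this (⟨h1.le, h0.le⟩ : (0:ℝ) ∈ Set.Icc (g t) (g 0))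
        exact h z ⟨hz.1, hz.2.trans ht.2⟩ hz0
      · exact h1
    have : (0:ℝ) < ∫ t in (0:ℝ)..1, g t :=
      intervalIntegral_pos_of_pos_on hi (fun t ht => hpos t ⟨ht.1.le, ht.2.le⟩) one_pos
    rw [hint] at this; simp at this

theorem gagliardo_nirenberg_circle :
    ∃ C > 0, ∀ g : ℝ → ℝ, Function.Periodic g 1 → ContDiff ℝ 1 g →
      (∫ t in (0:ℝ)..1, g t) = 0 →
      ∀ x : ℝ, |g x| ≤ C * (∫ t in (0:ℝ)..1, (deriv g t) ^ 2) ^ ((1:ℝ)/3) *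
        (∫ t in (0:ℝ)..1, |g t|) ^ ((1:ℝ)/3) := by
  refine ⟨2, by norm_num, ?_⟩
  intro g hper hg hint x
  have hgc : Continuous g := hg.continuous
  have hg'c : Continuous (deriv g) := hg.continuous_deriv le_rfl
  set I2 := ∫ t in (0:ℝ)..1, (deriv g t) ^ 2 with hI2def
  set I1 := ∫ t in (0:ℝ)..1, |g t| with hI1def
  have hI2nn : 0 ≤ I2 :=
    intervalIntegral.integral_nonneg zero_le_one (fun t _ => sq_nonneg _)
  have hI1nn : 0 ≤ I1 :=
    intervalIntegral.integral_nonneg zero_le_one (fun t _ => abs_nonneg _)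
  -- the maximum
  obtain ⟨x₀, hx₀mem, hx₀max⟩ := isCompact_Icc.exists_isMaxOn (Set.nonempty_Icc.2 zero_le_one)
    (hgc.abs.continuousOn (s := Set.Icc 0 1))
  set M := |g x₀| with hMdef
  have hMnn : 0 ≤ M := abs_nonneg _
  -- reduce to M
  have hxM : |g x| ≤ M := by
    have h1 : g (x - (⌊x⌋ : ℝ) * 1) = g x := hper.sub_int_mul_eq ⌊x⌋
    have h2 : x - (⌊x⌋ : ℝ) * 1 ∈ Set.Icc (0:ℝ) 1 := by
      rw [mul_one]
      constructor
      · linarith [Int.floor_le x]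
      · linarith [Int.lt_floor_add_one x]
    have h3 : |g (x - (⌊x⌋ : ℝ) * 1)| ≤ M := hx₀max h2
    rwa [h1] at h3
  refine hxM.trans ?_
  -- the zero
  obtain ⟨y, hy, hgy⟩ := gn_zero g hgc hint
  -- FTC
  have hFTC : g x₀ ^ 2 - g y ^ 2 = ∫ t in y..x₀, 2 * g t * deriv g t := by
    have hd : ∀ t ∈ Set.uIcc y x₀, HasDerivAt (fun s => g s ^ 2) (2 * g t * deriv g t) t := by
      intro t _
      have := ((hg.differentiable one_ne_zero).differentiableAt (x := t)).hasDerivAt.fun_pow 2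
      simpa [mul_comm, mul_assoc, mul_left_comm] using this
    have hi : IntervalIntegrable (fun t => 2 * g t * deriv g t) volume y x₀ :=
      (((continuous_const.mul hgc).mul hg'c).intervalIntegrable _ _)
    exact (intervalIntegral.integral_eq_sub_of_hasDerivAt hd hi).symm
  -- step: M^2 ≤ 2 * ∫_0^1 |g| |g'|
  have habs : Continuous fun t => |2 * g t * deriv g t| := by
    exact ((continuous_const.mul hgc).mul hg'c).abs
  have hstep1 : M ^ 2 ≤ ∫ t in (0:ℝ)..1, |2 * g t * deriv g t| := by
    have hM2 : M ^ 2 = g x₀ ^ 2 - g y ^ 2 := by rw [hMdef, sq_abs, hgy]; ring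
    rw [hM2, hFTC]
    calc (∫ t in y..x₀, 2 * g t * deriv g t)
        ≤ |∫ t in y..x₀, 2 * g t * deriv g t| := le_abs_self _
      _ ≤ abs (∫ t in y..x₀, abs (2 * g t * deriv g t)) :=
          intervalIntegral.norm_integral_le_abs_integral_norm
            (f := fun t => 2 * g t * deriv g t) (a := y) (b := x₀) (μ := volume)
      _ ≤ abs (∫ t in (0:ℝ)..1, abs (2 * g t * deriv g t)) := by
          apply intervalIntegral.abs_integral_mono_interval
          · exact Set.uIoc_subset_uIoc_of_uIcc_subset_uIcc
              (Set.uIcc_subset_uIcc (Set.mem_uIcc_of_le hy.1 hy.2)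
                (Set.mem_uIcc_of_le hx₀mem.1 hx₀mem.2))
          · exact Filter.Eventually.of_forall fun t => abs_nonneg _
          · exact habs.intervalIntegrable _ _
      _ = ∫ t in (0:ℝ)..1, |2 * g t * deriv g t| := by
          rw [abs_of_nonneg (intervalIntegral.integral_nonneg zero_le_one
            fun t _ => abs_nonneg _)]
  have hstep2 : (∫ t in (0:ℝ)..1, |2 * g t * deriv g t|) =
      2 * ∫ t in (0:ℝ)..1, |g t| * |deriv g t| := by
    rw [← intervalIntegral.integral_const_mul]
    congr 1; funext t
    rw [abs_mul, abs_mul, abs_two]; ring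
  -- ∫ |g|^2 ≤ M * I1
  have hstep3 : (∫ t in (0:ℝ)..1, |g t| ^ 2) ≤ M * I1 := by
    rw [hI1def, ← intervalIntegral.integral_const_mul]
    apply intervalIntegral.integral_mono_on zero_le_one
    · exact (hgc.abs.pow 2).intervalIntegrable _ _
    · exact (continuous_const.mul hgc.abs).intervalIntegrable _ _
    · intro t ht
      have h1 : |g t| ≤ M := hx₀max ht
      calc |g t| ^ 2 = |g t| * |g t| := sq (|g t|) ▸ by ring
        _ ≤ M * |g t| := mul_le_mul_of_nonneg_right h1 (abs_nonneg _)
  have hstep4 : (∫ t in (0:ℝ)..1, |deriv g t| ^ 2) = I2 := by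
    rw [hI2def]; congr 1; funext t; rw [sq_abs]
  -- combine
  have hmain : M ^ 2 ≤ 2 * (M * I1) ^ ((1:ℝ)/2) * I2 ^ ((1:ℝ)/2) := by
    calc M ^ 2 ≤ 2 * ∫ t in (0:ℝ)..1, |g t| * |deriv g t| := by
          rw [← hstep2]; exact hstep1
      _ ≤ 2 * ((∫ t in (0:ℝ)..1, |g t| ^ 2) ^ ((1:ℝ)/2) *
            (∫ t in (0:ℝ)..1, |deriv g t| ^ 2) ^ ((1:ℝ)/2)) := by
          linarith [gn_cs g hg]
      _ ≤ 2 * ((M * I1) ^ ((1:ℝ)/2) * I2 ^ ((1:ℝ)/2)) := by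
          rw [hstep4]
          have h1 : (∫ t in (0:ℝ)..1, |g t| ^ 2) ^ ((1:ℝ)/2) ≤ (M * I1) ^ ((1:ℝ)/2) :=
            Real.rpow_le_rpow (intervalIntegral.integral_nonneg zero_le_one
              fun t _ => sq_nonneg _) hstep3 (by norm_num)
          have h2 : 0 ≤ I2 ^ ((1:ℝ)/2) := Real.rpow_nonneg hI2nn _
          nlinarith [Real.rpow_nonneg (mul_nonneg hMnn hI1nn) ((1:ℝ)/2)]
      _ = 2 * (M * I1) ^ ((1:ℝ)/2) * I2 ^ ((1:ℝ)/2) := by ring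
  -- algebra
  rcases eq_or_lt_of_le hMnn with hM0 | hM0
  · rw [← hM0]
    positivity
  · -- M^(3/2) ≤ 2 * I2^(1/2) * I1^(1/2)
    have hsplit : (M * I1) ^ ((1:ℝ)/2) = M ^ ((1:ℝ)/2) * I1 ^ ((1:ℝ)/2) :=
      Real.mul_rpow hMnn hI1nn
    have hM2eq : M ^ 2 = M ^ ((3:ℝ)/2) * M ^ ((1:ℝ)/2) := by
      rw [← Real.rpow_add hM0, ← Real.rpow_natCast M 2]
      norm_num
    have hpos : (0:ℝ) < M ^ ((1:ℝ)/2) := Real.rpow_pos_of_pos hM0 _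
    have h32 : M ^ ((3:ℝ)/2) ≤ 2 * I2 ^ ((1:ℝ)/2) * I1 ^ ((1:ℝ)/2) := by
      have := hmain
      rw [hsplit, hM2eq] at this
      have h' : M ^ ((3:ℝ)/2) * M ^ ((1:ℝ)/2) ≤
          (2 * I2 ^ ((1:ℝ)/2) * I1 ^ ((1:ℝ)/2)) * M ^ ((1:ℝ)/2) := by nlinarith
      exact le_of_mul_le_mul_right h' hpos
    have hMrw : M = (M ^ ((3:ℝ)/2)) ^ ((2:ℝ)/3) := by
      rw [← Real.rpow_mul hMnn]
      norm_num
    have hfin : M ≤ (2 * I2 ^ ((1:ℝ)/2) * I1 ^ ((1:ℝ)/2)) ^ ((2:ℝ)/3) := by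
      rw [hMrw]
      exact Real.rpow_le_rpow (Real.rpow_nonneg hMnn _) h32 (by norm_num)
    have hrhs : (2 * I2 ^ ((1:ℝ)/2) * I1 ^ ((1:ℝ)/2)) ^ ((2:ℝ)/3) =
        (2:ℝ) ^ ((2:ℝ)/3) * I2 ^ ((1:ℝ)/3) * I1 ^ ((1:ℝ)/3) := by
      rw [Real.mul_rpow (mul_nonneg two_pos.le (Real.rpow_nonneg hI2nn _))
          (Real.rpow_nonneg hI1nn _),
        Real.mul_rpow two_pos.le (Real.rpow_nonneg hI2nn _)]
      rw [← Real.rpow_mul hI2nn, ← Real.rpow_mul hI1nn]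
      norm_num
    have h22 : (2:ℝ) ^ ((2:ℝ)/3) ≤ 2 := by
      calc (2:ℝ) ^ ((2:ℝ)/3) ≤ (2:ℝ) ^ (1:ℝ) :=
            Real.rpow_le_rpow_of_exponent_le one_le_two (by norm_num)
        _ = 2 := Real.rpow_one 2
    calc M ≤ (2:ℝ) ^ ((2:ℝ)/3) * I2 ^ ((1:ℝ)/3) * I1 ^ ((1:ℝ)/3) := by
          rw [← hrhs]; exact hfin
      _ ≤ 2 * I2 ^ ((1:ℝ)/3) * I1 ^ ((1:ℝ)/3) := by
          have h1 : 0 ≤ I2 ^ ((1:ℝ)/3) := Real.rpow_nonneg hI2nn _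
          have h2 : 0 ≤ I1 ^ ((1:ℝ)/3) := Real.rpow_nonneg hI1nn _
          exact mul_le_mul_of_nonneg_right (mul_le_mul_of_nonneg_right h22 h1) h2
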